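/- Let s ∈ ℝ and −1 < α < 1. For every sequence of real numbers (u_ℓ)_{ℓ∈ℕ} with ∑_{ℓ=0}^{∞} (ℓ+1/2)^{2s}·u_ℓ² < ∞, one has lim_{δ→0⁺} ∑_{ℓ=0}^{∞} (ℓ+1/2)^{2(s−2)}·(λ_δ(ℓ) + ℓ(ℓ+1))²·u_ℓ² = 0. (This expresses, in coefficient form, that L_δ → L_0 strongly as operators from H^s(S²) to H^{s−2}(S²) as δ → 0.) -/

import Mathlib

open MeasureTheory Real Polynomial

/-- The ℓ-th Legendre polynomial, via Rodrigues' formula. -/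
noncomputable def legendre (l : ℕ) : Polynomial ℝ :=
  (((2 : ℝ) ^ l * l.factorial)⁻¹) • ((derivative (R := ℝ)) ^ l) ((X ^ 2 - 1) ^ l)

/-- The eigenvalue `λ_δ(ℓ)` of the nonlocal Laplace–Beltrami operator with the weakly
singular kernel with singularity strength `α` and horizon `δ`. -/
noncomputable def lambdaNL (α δ : ℝ) (l : ℕ) : ℝ :=
  2 * π * ∫ t in (1 - δ ^ 2 / 2)..1,
    ((legendre l).eval t - 1) * ((1 + α) * (2 : ℝ) ^ (1 + α) / (π * δ ^ (2 + 2 * α) * (1 - t) ^ (1 - α)))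

noncomputable def legCoeff (l j : ℕ) : ℝ := (l.choose j) * ((l + j).choose j) / 2 ^ j

theorem legendre_eq_sum (l : ℕ) :
    legendre l = ∑ j ∈ Finset.range (l + 1), C (legCoeff l j) * (X - 1) ^ j := by
  have h1 : ((X : Polynomial ℝ) ^ 2 - 1) ^ l
      = ∑ j ∈ Finset.range (l + 1), C ((l.choose j : ℝ) * 2 ^ (l - j)) * (X - 1) ^ (l + j) := by
    have e1 : ((X : Polynomial ℝ) ^ 2 - 1) = (X - 1) * ((X - 1) + 2) := by ring
    rw [e1, mul_pow, add_pow, Finset.mul_sum]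
    refine Finset.sum_congr rfl fun j hj => ?_
    have e2 : (C ((l.choose j : ℝ) * 2 ^ (l - j)) : Polynomial ℝ)
        = (l.choose j : Polynomial ℝ) * 2 ^ (l - j) := by
      simp [C_mul, C_pow, Polynomial.C_eq_natCast, map_ofNat]
    rw [e2]; ring
  unfold legendre
  rw [h1, map_sum, Finset.smul_sum]
  refine Finset.sum_congr rfl fun j hj => ?_
  have hj' : j ≤ l := Nat.lt_succ_iff.mp (Finset.mem_range.mp hj)
  have h2 : ((derivative (R := ℝ)) ^ l) (C ((l.choose j : ℝ) * 2 ^ (l - j)) * (X - 1) ^ (l + j))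
      = C ((l.choose j : ℝ) * 2 ^ (l - j)) * (((l + j).descFactorial l : ℝ[X]) * (X - 1) ^ j) := by
    rw [← smul_eq_C_mul, _root_.map_smul, Module.End.pow_apply]
    rw [smul_eq_C_mul]
    congr 1
    have e3 : ((X : Polynomial ℝ) - 1) = X - Polynomial.C 1 := by rw [C_1]
    rw [e3, iterate_derivative_X_sub_pow, nsmul_eq_mul]
    congr 2
    omega
  rw [h2, ← Polynomial.C_eq_natCast, ← mul_assoc, ← C_mul, smul_eq_C_mul, ← mul_assoc, ← C_mul]
  congr 1
  unfold legCoeff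
  have hfac : ((l + j).descFactorial l : ℝ) = (l.factorial : ℝ) * ((l + j).choose l : ℝ) := by
    rw [Nat.descFactorial_eq_factorial_mul_choose]; push_cast; ring
  have hsymm : ((l + j).choose l : ℝ) = ((l + j).choose j : ℝ) := by
    have h := Nat.choose_symm (Nat.le_add_right l j)
    rw [Nat.add_sub_cancel_left] at h
    exact_mod_cast h.symm
  have h2p : (2 : ℝ) ^ (l - j) * 2 ^ j = 2 ^ l := by
    rw [← pow_add]; congr 1; omega
  have hlf : (l.factorial : ℝ) ≠ 0 := Nat.cast_ne_zero.mpr l.factorial_ne_zero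
  have h2l : (2 : ℝ) ^ l ≠ 0 := by positivity
  have h2j : (2 : ℝ) ^ j ≠ 0 := by positivity
  rw [hfac, hsymm, ← h2p]
  field_simp

theorem legCoeff_zero (l : ℕ) : legCoeff l 0 = 1 := by simp [legCoeff]

theorem legCoeff_one (l : ℕ) : legCoeff l 1 = l * (l + 1) / 2 := by
  simp [legCoeff, Nat.choose_one_right]

theorem legCoeff_of_lt {l j : ℕ} (h : l < j) : legCoeff l j = 0 := by
  simp [legCoeff, Nat.choose_eq_zero_of_lt h]

noncomputable def legT (l : ℕ) : Polynomial ℝ :=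
  ∑ j ∈ Finset.range (l + 1), C (legCoeff l (j + 2)) * (X - 1) ^ j

theorem legendre_factor (l : ℕ) :
    legendre l = C 1 + C ((l : ℝ) * (l + 1) / 2) * (X - 1) + (X - 1) ^ 2 * legT l := by
  have key : ∑ j ∈ Finset.range (l + 3), C (legCoeff l j) * ((X : Polynomial ℝ) - 1) ^ j
      = legendre l := by
    rw [legendre_eq_sum, Finset.sum_range_succ, Finset.sum_range_succ,
      legCoeff_of_lt (by omega), legCoeff_of_lt (by omega)]
    simp
  rw [← key, Finset.sum_range_succ', Finset.sum_range_succ', legT, Finset.mul_sum]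
  rw [Finset.sum_congr rfl (fun j (_ : j ∈ Finset.range (l + 1)) =>
    (by ring : C (legCoeff l (j + 1 + 1)) * ((X : Polynomial ℝ) - 1) ^ (j + 1 + 1)
      = (X - 1) ^ 2 * (C (legCoeff l (j + 2)) * (X - 1) ^ j)))]
  rw [legCoeff_zero, legCoeff_one]
  push_cast
  ring

theorem iterate_derivative_sq_sub_one (m : ℕ) :
    derivative^[m + 3] ((X : Polynomial ℝ) ^ 2 - 1) = 0 := by
  rw [Function.iterate_add_apply]
  have h3 : derivative^[3] ((X : Polynomial ℝ) ^ 2 - 1) = 0 := by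
    show derivative (derivative (derivative ((X : Polynomial ℝ) ^ 2 - 1))) = 0
    simp [derivative_sub, derivative_pow]
  rw [h3, Polynomial.iterate_derivative_zero]

theorem w_ODE (l : ℕ) (hl : 1 ≤ l) :
    (1 - X ^ 2) * derivative (derivative (derivative^[l] (((X : Polynomial ℝ) ^ 2 - 1) ^ l)))
      - 2 * X * derivative (derivative^[l] (((X : Polynomial ℝ) ^ 2 - 1) ^ l))
      + C ((l : ℝ) * (l + 1)) * derivative^[l] (((X : Polynomial ℝ) ^ 2 - 1) ^ l) = 0 := by
  set u : Polynomial ℝ := ((X : Polynomial ℝ) ^ 2 - 1) ^ l with hu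
  -- basic first-order identity
  have h0 : derivative u * ((X : Polynomial ℝ) ^ 2 - 1) = C ((2 * l : ℕ) : ℝ) * (u * X) := by
    rw [mul_comm (derivative u), mul_comm u X]
    rw [hu, derivative_pow]
    have : ((X : Polynomial ℝ) ^ 2 - 1) ^ (l - 1) * (X ^ 2 - 1) = (X ^ 2 - 1) ^ l := by
      rw [← pow_succ]; congr 1; omega
    push_cast
    calc ((X : Polynomial ℝ) ^ 2 - 1) * (C (l : ℝ) * (X ^ 2 - 1) ^ (l - 1) * derivative (X ^ 2 - 1))
        = C (l : ℝ) * derivative ((X:Polynomial ℝ)^2 - 1) * ((X ^ 2 - 1) ^ (l-1) * (X^2-1)) := by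
          ring
      _ = _ := by
          rw [this]
          simp only [derivative_sub, derivative_pow, derivative_X, derivative_one]
          push_cast
          rw [C_mul]
          ring
  -- differentiate l+1 times
  have h1 := congrArg (fun p => derivative^[l + 1] p) h0
  rw [Polynomial.iterate_derivative_mul, Polynomial.iterate_derivative_C_mul,
    Polynomial.iterate_derivative_mul] at h1
  rw [← Finset.sum_subset (Finset.range_subset_range.mpr (by omega : 3 ≤ l + 1 + 1))
    (fun k _ hk => by
      obtain ⟨m, rfl⟩ : ∃ m, k = m + 3 := ⟨k - 3, by simp at hk; omega⟩
      rw [iterate_derivative_sq_sub_one, mul_zero, smul_zero])] at h1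
  rw [← Finset.sum_subset (Finset.range_subset_range.mpr (by omega : 2 ≤ l + 1 + 1))
    (fun k _ hk => by
      obtain ⟨m, rfl⟩ : ∃ m, k = m + 2 := ⟨k - 2, by simp at hk; omega⟩
      have hX : derivative^[m + 2] (X : Polynomial ℝ) = 0 := by
        rw [Function.iterate_add_apply]
        have : derivative^[2] (X : Polynomial ℝ) = 0 := by
          show derivative (derivative (X : Polynomial ℝ)) = 0
          simp
        rw [this, Polynomial.iterate_derivative_zero]
      rw [hX, mul_zero, smul_zero])] at h1
  simp only [Finset.sum_range_succ, Finset.sum_range_zero, zero_add, Nat.choose_zero_right,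
    one_smul, Nat.choose_one_right, Nat.sub_zero, Function.iterate_zero_apply] at h1
  -- identify iterated derivatives
  have e1 : derivative^[l + 1] (derivative u) = derivative (derivative (derivative^[l] u)) := by
    rw [← Function.iterate_succ_apply, Function.iterate_succ_apply', Function.iterate_succ_apply']
  have e2 : derivative^[l] (derivative u) = derivative (derivative^[l] u) := by
    rw [← Function.iterate_succ_apply, Function.iterate_succ_apply']
  have e3 : derivative^[l + 1 - 2] (derivative u) = derivative^[l] u := by
    have : l + 1 - 2 = l - 1 := by omega
    rw [this, ← Function.iterate_succ_apply]
    congr 1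
    omega
  have e4 : derivative^[l + 1] u = derivative (derivative^[l] u) := Function.iterate_succ_apply' _ _ _
  have e5 : derivative^[1] ((X : Polynomial ℝ) ^ 2 - 1) = C 2 * X := by
    show derivative ((X : Polynomial ℝ) ^ 2 - 1) = C 2 * X
    simp [derivative_pow]
  have e6 : derivative^[2] ((X : Polynomial ℝ) ^ 2 - 1) = C 2 := by
    show derivative (derivative ((X : Polynomial ℝ) ^ 2 - 1)) = C 2
    simp [derivative_pow]
  have e7 : derivative^[1] (X : Polynomial ℝ) = 1 := by
    show derivative (X : Polynomial ℝ) = 1; simp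
  simp only [Nat.add_sub_cancel] at h1
  rw [e1, e2, e3, e4, e5, e6, e7] at h1
  -- choose 2 identity
  have hdvd : 2 ∣ (l + 1) * l := by
    rcases Nat.even_or_odd l with h | h
    · exact Dvd.dvd.mul_left h.two_dvd _
    · exact Dvd.dvd.mul_right (h.add_one).two_dvd _
  have hn : (l + 1).choose 2 * 2 = (l + 1) * l := by
    rw [Nat.choose_two_right, Nat.add_sub_cancel, Nat.div_mul_cancel hdvd]
  have hnp : (((l + 1).choose 2 : ℕ) : Polynomial ℝ) * 2 = ((l : Polynomial ℝ) + 1) * l := by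
    exact_mod_cast congrArg (Nat.cast : ℕ → Polynomial ℝ) hn
  simp only [nsmul_eq_mul, Polynomial.C_eq_natCast, C_mul, C_add, C_1, map_ofNat, Nat.cast_mul,
    Nat.cast_add, Nat.cast_one, Nat.cast_ofNat] at h1 ⊢
  linear_combination (-1 : Polynomial ℝ) * h1 + (derivative^[l] u) * hnp

-- eval lemmas
theorem legendre_eval_one (l : ℕ) : (legendre l).eval 1 = 1 := by
  rw [legendre_eq_sum]
  simp only [eval_finset_sum, eval_mul, eval_pow, eval_sub, eval_X, eval_one, eval_C, sub_self]
  rw [Finset.sum_eq_single 0]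
  · simp [legCoeff_zero]
  · intro j _ hj; rw [zero_pow hj, mul_zero]
  · intro h; simp at h

theorem deriv_legendre_eval_one (l : ℕ) :
    (derivative (legendre l)).eval 1 = l * (l + 1) / 2 := by
  rw [legendre_eq_sum]
  rw [derivative_sum]
  simp only [derivative_mul, derivative_C, zero_mul, zero_add, derivative_pow, derivative_sub,
    derivative_X, derivative_one, sub_zero, mul_one]
  simp only [eval_finset_sum, eval_mul, eval_pow, eval_sub, eval_X, eval_one, eval_C,
    eval_natCast, sub_self]
  rcases Nat.eq_zero_or_pos l with rfl | hl
  · norm_num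
  rw [Finset.sum_eq_single 1]
  · simp [legCoeff_one]
  · intro j hj hj1
    rcases Nat.eq_zero_or_pos j with rfl | hjp
    · simp
    · rw [zero_pow (by omega : j - 1 ≠ 0)]; ring
  · intro h; simp at h; omega

theorem legendre_ODE (l : ℕ) :
    (1 - X ^ 2) * derivative (derivative (legendre l)) - 2 * X * derivative (legendre l)
      + C ((l : ℝ) * (l + 1)) * legendre l = 0 := by
  rcases Nat.eq_zero_or_pos l with rfl | hl
  · have : legendre 0 = 1 := by
      rw [legendre_eq_sum]; simp [legCoeff_zero]
    rw [this]
    simp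
  · unfold legendre
    rw [Module.End.pow_apply]
    simp only [derivative_smul]
    rw [mul_smul_comm, mul_smul_comm, mul_smul_comm, ← smul_sub, ← smul_add, w_ODE l hl,
      smul_zero]

-- parity
theorem iter_deriv_comp_neg (k : ℕ) (p : Polynomial ℝ) :
    derivative^[k] (p.comp (-X)) = (-1) ^ k * (derivative^[k] p).comp (-X) := by
  induction k generalizing p with
  | zero => simp
  | succ k ih =>
    rw [Function.iterate_succ_apply]
    have h1 : derivative (p.comp (-X)) = (-(derivative p)).comp (-X) := by
      rw [derivative_comp, neg_comp]; simp
    rw [h1, ih (-(derivative p)), iterate_derivative_neg, neg_comp,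
      ← Function.iterate_succ_apply, pow_succ]
    ring

theorem legendre_comp_neg (l : ℕ) :
    (legendre l).comp (-X) = (-1 : Polynomial ℝ) ^ l * legendre l := by
  have hv : (((X : Polynomial ℝ) ^ 2 - 1) ^ l).comp (-X) = ((X : Polynomial ℝ) ^ 2 - 1) ^ l := by
    simp [pow_comp, sub_comp, one_comp, X_comp]
  have h2 := iter_deriv_comp_neg l (((X : Polynomial ℝ) ^ 2 - 1) ^ l)
  rw [hv] at h2
  unfold legendre
  rw [Module.End.pow_apply, smul_comp, mul_smul_comm]
  congr 1
  conv_rhs => rw [h2]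
  rw [← mul_assoc, ← pow_add]
  have : Even (l + l) := ⟨l, rfl⟩
  rw [this.neg_one_pow, one_mul]

theorem legendre_zero_eq : legendre 0 = 1 := by
  rw [legendre_eq_sum]; simp [legCoeff_zero]

theorem legendre_one_eq : legendre 1 = X := by
  rw [legendre_eq_sum]
  rw [Finset.sum_range_succ, Finset.sum_range_one, legCoeff_zero, legCoeff_one]
  norm_num

theorem deriv_legendre_eval_neg_one_sq (l : ℕ) :
    ((derivative (legendre l)).eval (-1)) ^ 2 = ((l : ℝ) * (l + 1) / 2) ^ 2 := by
  have hfun : (fun x : ℝ => (legendre l).eval (-x))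
      = fun x : ℝ => (-1 : ℝ) ^ l * (legendre l).eval x := by
    funext x
    have := congrArg (eval x) (legendre_comp_neg l)
    simpa [eval_comp] using this
  have hd1 : HasDerivAt (fun x : ℝ => (legendre l).eval (-x))
      ((derivative (legendre l)).eval (-(1:ℝ)) * (-1)) 1 :=
    ((legendre l).hasDerivAt (-(1:ℝ))).comp 1 (hasDerivAt_neg 1)
  have hd2 : HasDerivAt (fun x : ℝ => (-1 : ℝ) ^ l * (legendre l).eval x)
      ((-1 : ℝ) ^ l * (derivative (legendre l)).eval 1) 1 :=
    ((legendre l).hasDerivAt 1).const_mul _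
  rw [hfun] at hd1
  have heq := hd1.unique hd2
  rw [deriv_legendre_eval_one] at heq
  have hsq : ((-1 : ℝ) ^ l) ^ 2 = 1 := by
    rw [← pow_mul, mul_comm, pow_mul]; norm_num
  have : ((derivative (legendre l)).eval (-(1:ℝ)) * (-1)) ^ 2
      = ((-1:ℝ) ^ l * ((l:ℝ) * (l + 1) / 2)) ^ 2 := by rw [heq]
  rw [mul_pow, mul_pow, hsq, one_mul] at this
  simpa using this

theorem abs_deriv_legendre_le (l : ℕ) :
    ∀ x ∈ Set.Icc (-1 : ℝ) 1, |(derivative (legendre l)).eval x| ≤ (l : ℝ) * (l + 1) / 2 := by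
  rcases Nat.lt_or_ge l 2 with hl | hl
  · interval_cases l
    · rw [legendre_zero_eq]; intro x _; simp
    · rw [legendre_one_eq]; intro x _; simp
  intro x hx
  set lam : ℝ := (l : ℝ) * (l + 1) with hlam
  have hlam6 : (6 : ℝ) ≤ lam := by
    have : (2 : ℝ) ≤ (l : ℝ) := by exact_mod_cast hl
    nlinarith
  set Q : Polynomial ℝ := derivative (legendre l) with hQ
  have hODE := legendre_ODE l
  have hODE2 : (1 - X ^ 2) * derivative (derivative Q) - 4 * X * derivative Q
      + C (lam - 2) * Q = 0 := by
    have hd := congrArg derivative hODE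
    simp only [derivative_add, derivative_sub, derivative_mul, derivative_one, derivative_X,
      derivative_C, derivative_zero, derivative_pow, derivative_ofNat, Nat.cast_ofNat,
      map_ofNat] at hd
    rw [map_sub, map_ofNat]
    linear_combination hd
  set G : Polynomial ℝ := (1 - X ^ 2) * (derivative Q) ^ 2 + C (lam - 2) * Q ^ 2 with hGdef
  have hG : derivative G = 6 * X * (derivative Q) ^ 2 := by
    rw [hGdef]
    simp only [derivative_add, derivative_sub, derivative_mul, derivative_one, derivative_X,
      derivative_C, derivative_zero, derivative_pow, derivative_ofNat, Nat.cast_ofNat,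
      map_ofNat]
    linear_combination (2 * derivative Q) * hODE2
  have hderiv : ∀ y : ℝ, deriv (fun z => G.eval z) y = 6 * y * ((derivative Q).eval y) ^ 2 := by
    intro y
    rw [Polynomial.deriv, hG]
    simp
  have hcont : Continuous fun z : ℝ => G.eval z := G.continuous_aeval
  have hdiff : Differentiable ℝ fun z : ℝ => G.eval z := fun y => (G.hasDerivAt y).differentiableAt
  have hmono : MonotoneOn (fun z => G.eval z) (Set.Icc (0 : ℝ) 1) := by
    apply monotoneOn_of_deriv_nonneg (convex_Icc 0 1) hcont.continuousOn
      (hdiff.differentiableOn)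
    intro y hy
    rw [interior_Icc] at hy
    rw [hderiv]
    have := sq_nonneg ((derivative Q).eval y)
    nlinarith [hy.1]
  have hanti : AntitoneOn (fun z => G.eval z) (Set.Icc (-1 : ℝ) 0) := by
    apply antitoneOn_of_deriv_nonpos (convex_Icc (-1) 0) hcont.continuousOn
      (hdiff.differentiableOn)
    intro y hy
    rw [interior_Icc] at hy
    rw [hderiv]
    have := sq_nonneg ((derivative Q).eval y)
    nlinarith [hy.2]
  have hg1 : G.eval 1 = (lam - 2) * (lam / 2) ^ 2 := by
    rw [hGdef]
    simp only [eval_add, eval_mul, eval_sub, eval_pow, eval_one, eval_X, eval_C]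
    rw [hQ, deriv_legendre_eval_one]
    norm_num [hlam]
  have hgm1 : G.eval (-1) = (lam - 2) * (lam / 2) ^ 2 := by
    rw [hGdef]
    simp only [eval_add, eval_mul, eval_sub, eval_pow, eval_one, eval_X, eval_C]
    rw [hQ, deriv_legendre_eval_neg_one_sq]
    norm_num [hlam]
  have hbound : G.eval x ≤ (lam - 2) * (lam / 2) ^ 2 := by
    rcases le_total x 0 with h0 | h0
    · rw [← hgm1]
      exact hanti ⟨le_refl _, by norm_num⟩ ⟨hx.1, h0⟩ hx.1
    · rw [← hg1]
      exact hmono ⟨h0, hx.2⟩ ⟨zero_le_one, le_refl _⟩ hx.2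
  have hQsq : (Q.eval x) ^ 2 ≤ (lam / 2) ^ 2 := by
    have h1 : (0 : ℝ) ≤ (1 - x ^ 2) * ((derivative Q).eval x) ^ 2 := by
      have hx2 : x ^ 2 ≤ 1 := by nlinarith [hx.1, hx.2]
      nlinarith [sq_nonneg ((derivative Q).eval x)]
    have hGx : G.eval x = (1 - x ^ 2) * ((derivative Q).eval x) ^ 2 + (lam - 2) * (Q.eval x) ^ 2 := by
      rw [hGdef]; simp
    nlinarith [hbound]
  calc |Q.eval x| = Real.sqrt ((Q.eval x) ^ 2) := (Real.sqrt_sq_eq_abs _).symm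
    _ ≤ Real.sqrt ((lam / 2) ^ 2) := Real.sqrt_le_sqrt hQsq
    _ = |lam / 2| := Real.sqrt_sq_eq_abs _
    _ = lam / 2 := abs_of_nonneg (by nlinarith)
    _ = (l : ℝ) * (l + 1) / 2 := rfl

theorem abs_legendre_eval_sub_one_le (l : ℕ) {t : ℝ} (ht : t ∈ Set.Icc (-1 : ℝ) 1) :
    |(legendre l).eval t - 1| ≤ ((l : ℝ) * (l + 1) / 2) * (1 - t) := by
  have key := Convex.norm_image_sub_le_of_norm_hasDerivWithin_le
    (f := fun x : ℝ => (legendre l).eval x)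
    (f' := fun x : ℝ => (derivative (legendre l)).eval x)
    (fun x hx => ((legendre l).hasDerivAt x).hasDerivWithinAt)
    (fun x hx => by rw [Real.norm_eq_abs]; exact abs_deriv_legendre_le l x hx)
    (convex_Icc _ _) (Set.right_mem_Icc.mpr (by norm_num)) ht
  simp only [Real.norm_eq_abs] at key
  rw [legendre_eval_one] at key
  calc |(legendre l).eval t - 1| ≤ ((l:ℝ) * (l+1) / 2) * |t - 1| := key
    _ = ((l:ℝ) * (l+1) / 2) * (1 - t) := by
        rw [abs_sub_comm, abs_of_nonneg (by linarith [ht.2])]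

noncomputable def legM (l : ℕ) : ℝ := ∑ j ∈ Finset.range (l + 1), |legCoeff l (j + 2)| * 2 ^ j

theorem legM_nonneg (l : ℕ) : 0 ≤ legM l :=
  Finset.sum_nonneg fun j _ => mul_nonneg (abs_nonneg _) (by positivity)

theorem abs_legT_eval_le (l : ℕ) {x : ℝ} (hx : |x - 1| ≤ 2) : |(legT l).eval x| ≤ legM l := by
  rw [legT]
  simp only [eval_finset_sum, eval_mul, eval_C, eval_pow, eval_sub, eval_X, eval_one]
  refine (Finset.abs_sum_le_sum_abs _ _).trans (Finset.sum_le_sum fun j _ => ?_)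
  rw [abs_mul, abs_pow]
  exact mul_le_mul_of_nonneg_left (pow_le_pow_left₀ (abs_nonneg _) hx j) (abs_nonneg _)

theorem eval_legendre_sub_one (l : ℕ) (t : ℝ) :
    (legendre l).eval t - 1 = ((l : ℝ) * (l + 1) / 2) * (t - 1) + (t - 1) ^ 2 * (legT l).eval t := by
  conv_lhs => rw [legendre_factor l]
  simp only [eval_add, eval_mul, eval_C, eval_pow, eval_sub, eval_X, eval_one]
  ring

section Main
variable {α δ : ℝ}

theorem key_const (hα : -1 < α) (hδ : 0 < δ) :
    2 * π * ((1 + α) * (2 : ℝ) ^ (1 + α) / (π * δ ^ (2 + 2 * α))) * (δ ^ 2 / 2) ^ (α + 1)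
      = 2 * (1 + α) := by
  have hπ : (0 : ℝ) < π := pi_pos
  have h1 : ((δ : ℝ) ^ 2 / 2) ^ (α + 1) = (δ ^ 2 : ℝ) ^ (α + 1) / (2 : ℝ) ^ (α + 1) :=
    Real.div_rpow (by positivity) (by norm_num) (α + 1)
  have h2 : ((δ : ℝ) ^ 2) ^ (α + 1) = δ ^ ((2 : ℝ) * (α + 1)) := by
    rw [← Real.rpow_natCast δ 2, ← Real.rpow_mul hδ.le]
    norm_num
  have h3 : (2 : ℝ) ^ (1 + α) = (2 : ℝ) ^ (α + 1) := by rw [add_comm]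
  have h4 : δ ^ ((2 : ℝ) * (α + 1)) = δ ^ (2 + 2 * α) := by rw [show (2:ℝ) * (α+1) = 2 + 2*α by ring]
  rw [h1, h2, h3, h4]
  have h5 : (0:ℝ) < δ ^ (2 + 2*α) := Real.rpow_pos_of_pos hδ _
  have h6 : (0:ℝ) < (2:ℝ) ^ (α + 1) := Real.rpow_pos_of_pos (by norm_num) _
  field_simp

theorem lambdaNL_eq (hα : -1 < α) (hδ : 0 < δ) (l : ℕ) :
    lambdaNL α δ l + (l : ℝ) * (l + 1)
      = 2 * π * ((1 + α) * (2 : ℝ) ^ (1 + α) / (π * δ ^ (2 + 2 * α)))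
        * ∫ u in (0 : ℝ)..(δ ^ 2 / 2), (legT l).eval (1 - u) * u ^ (1 + α) := by
  have hπ : (0 : ℝ) < π := pi_pos
  set lam : ℝ := (l : ℝ) * (l + 1) with hlam
  set KK : ℝ := (1 + α) * (2 : ℝ) ^ (1 + α) / (π * δ ^ (2 + 2 * α)) with hKK
  set h : ℝ := δ ^ 2 / 2 with hh
  have hhpos : 0 < h := div_pos (pow_pos hδ 2) two_pos
  -- change of variables
  set F : ℝ → ℝ := fun u => ((legendre l).eval (1 - u) - 1) * (KK / u ^ (1 - α)) with hF
  have step1 : lambdaNL α δ l = 2 * π * ∫ u in (0 : ℝ)..h, F u := by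
    rw [lambdaNL]
    congr 1
    have e0 : ∀ t : ℝ, ((legendre l).eval t - 1)
        * ((1 + α) * (2 : ℝ) ^ (1 + α) / (π * δ ^ (2 + 2 * α) * (1 - t) ^ (1 - α)))
        = F (1 - t) := by
      intro t
      rw [hF]
      simp only [sub_sub_cancel]
      rw [div_div]
    rw [intervalIntegral.integral_congr (g := fun t => F (1 - t)) (fun t _ => e0 t)]
    rw [intervalIntegral.integral_comp_sub_left F 1]
    norm_num
    rw [hh]
  -- pointwise identity on (0, h]
  set F2 : ℝ → ℝ := fun u => (-(lam / 2) * KK) * u ^ α + KK * ((legT l).eval (1 - u) * u ^ (1 + α))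
    with hF2
  have step2 : ∀ u ∈ Set.Ioc (0:ℝ) h, F u = F2 u := by
    intro u hu
    have hu0 : 0 < u := hu.1
    have e1 : (legendre l).eval (1 - u) - 1 = -(lam / 2) * u + u ^ 2 * (legT l).eval (1 - u) := by
      rw [eval_legendre_sub_one l (1 - u)]
      ring_nf
      rw [hlam]; ring
    have e2 : KK / u ^ (1 - α) = KK * u ^ (α - 1) := by
      rw [div_eq_mul_inv, ← Real.rpow_neg hu0.le]
      norm_num
    have e3 : u * u ^ (α - 1) = u ^ α := by
      nth_rewrite 1 [← Real.rpow_one u]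
      rw [← Real.rpow_add hu0]
      norm_num
    have e4 : (u : ℝ) ^ (2 : ℕ) * u ^ (α - 1) = u ^ (1 + α) := by
      rw [← Real.rpow_natCast u 2, ← Real.rpow_add hu0]
      norm_num
      rw [show (2:ℝ) + (α - 1) = 1 + α by ring]
    simp only [hF, hF2]
    rw [e1, e2]
    calc (-(lam / 2) * u + u ^ 2 * (legT l).eval (1 - u)) * (KK * u ^ (α - 1))
        = -(lam / 2) * KK * (u * u ^ (α - 1))
          + KK * ((legT l).eval (1 - u) * (u ^ (2:ℕ) * u ^ (α - 1))) := by ring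
      _ = _ := by rw [e3, e4]
  -- integrability
  have i1 : IntervalIntegrable (fun u : ℝ => u ^ α) volume 0 h :=
    intervalIntegral.intervalIntegrable_rpow' hα
  have i1' : IntervalIntegrable (fun u : ℝ => u ^ (1 + α)) volume 0 h :=
    intervalIntegral.intervalIntegrable_rpow' (by linarith)
  have hTcont : Continuous fun u : ℝ => (legT l).eval (1 - u) :=
    (legT l).continuous_aeval.comp (continuous_const.sub continuous_id)
  have i2 : IntervalIntegrable (fun u : ℝ => (legT l).eval (1 - u) * u ^ (1 + α)) volume 0 h :=
    i1'.continuousOn_mul hTcont.continuousOn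
  have step3 : ∫ u in (0:ℝ)..h, F u = ∫ u in (0:ℝ)..h, F2 u := by
    apply intervalIntegral.integral_congr_ae
    rw [Set.uIoc_of_le hhpos.le]
    exact MeasureTheory.ae_of_all _ step2
  have step4 : ∫ u in (0:ℝ)..h, F2 u
      = (-(lam / 2) * KK) * (h ^ (α + 1) / (α + 1))
        + KK * ∫ u in (0:ℝ)..h, (legT l).eval (1 - u) * u ^ (1 + α) := by
    rw [hF2]
    rw [intervalIntegral.integral_add (i1.const_mul _) (i2.const_mul _),
      intervalIntegral.integral_const_mul, intervalIntegral.integral_const_mul]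
    congr 1
    rw [integral_rpow (Or.inl hα)]
    rw [Real.zero_rpow (by linarith : α + 1 ≠ 0)]
    ring
  rw [step1, step3, step4]
  have hkey := key_const hα hδ
  rw [← hKK, ← hh] at hkey
  rw [mul_add]
  have : 2 * π * (-(lam / 2) * KK * (h ^ (α + 1) / (α + 1))) = -lam := by
    have hne : α + 1 ≠ 0 := by linarith
    rw [show 2 * π * (-(lam / 2) * KK * (h ^ (α + 1) / (α + 1))) = -(lam / 2) * (2 * π * KK * h ^ (α + 1)) / (α + 1) by ring, hkey]
    rw [div_eq_iff hne]; ring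
  rw [this]
  ring
theorem lambdaNL_bounds (hα : -1 < α) (hδ : 0 < δ) (hδ1 : δ ≤ 1) (l : ℕ) :
    |lambdaNL α δ l + (l : ℝ) * (l + 1)| ≤ 2 * ((l : ℝ) * (l + 1)) ∧
    |lambdaNL α δ l + (l : ℝ) * (l + 1)| ≤ legM l * δ ^ 2 := by
  have hπ : (0 : ℝ) < π := pi_pos
  set lam : ℝ := (l : ℝ) * (l + 1) with hlam
  have hlamnn : 0 ≤ lam := by positivity
  set KK : ℝ := (1 + α) * (2 : ℝ) ^ (1 + α) / (π * δ ^ (2 + 2 * α)) with hKK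
  set h : ℝ := δ ^ 2 / 2 with hh
  have hhpos : 0 < h := div_pos (pow_pos hδ 2) two_pos
  have hh2 : h ≤ 1 / 2 := by
    rw [hh]
    nlinarith
  have hKKpos : 0 < KK :=
    div_pos (mul_pos (by linarith) (Real.rpow_pos_of_pos two_pos _))
      (mul_pos hπ (Real.rpow_pos_of_pos hδ _))
  have heq := lambdaNL_eq hα hδ l
  rw [← hKK, ← hh, ← hlam] at heq
  set I2 : ℝ → ℝ := fun u => (legT l).eval (1 - u) * u ^ (1 + α) with hI2
  have i1 : IntervalIntegrable (fun u : ℝ => u ^ α) volume 0 h :=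
    intervalIntegral.intervalIntegrable_rpow' hα
  have i1' : IntervalIntegrable (fun u : ℝ => u ^ (1 + α)) volume 0 h :=
    intervalIntegral.intervalIntegrable_rpow' (by linarith)
  have hTcont : Continuous fun u : ℝ => (legT l).eval (1 - u) :=
    (legT l).continuous_aeval.comp (continuous_const.sub continuous_id)
  have i2 : IntervalIntegrable I2 volume 0 h := i1'.continuousOn_mul hTcont.continuousOn
  have habs0 : |lambdaNL α δ l + lam| = 2 * π * KK * |∫ u in (0:ℝ)..h, I2 u| := by
    rw [heq, abs_mul, abs_of_pos (by positivity : (0:ℝ) < 2 * π * KK)]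
  have habs : |∫ u in (0:ℝ)..h, I2 u| ≤ ∫ u in (0:ℝ)..h, |I2 u| :=
    intervalIntegral.abs_integral_le_integral_abs hhpos.le
  have hkey := key_const hα hδ
  rw [← hKK, ← hh] at hkey
  -- exponent identities
  have e3 : ∀ u : ℝ, 0 < u → u * u ^ (α - 1) = u ^ α := by
    intro u hu0
    nth_rewrite 1 [← Real.rpow_one u]
    rw [← Real.rpow_add hu0]
    norm_num
  have e4 : ∀ u : ℝ, 0 < u → (u : ℝ) ^ 2 * u ^ (α - 1) = u ^ (1 + α) := by
    intro u hu0
    rw [← Real.rpow_natCast u 2, ← Real.rpow_add hu0]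
    norm_num
    rw [show (2:ℝ) + (α - 1) = 1 + α by ring]
  constructor
  · -- bound A
    have hptA : ∀ u ∈ Set.Icc (0:ℝ) h, |I2 u| ≤ lam * u ^ α := by
      intro u hu
      rcases eq_or_lt_of_le hu.1 with rfl | hu0
      · simp only [hI2, Real.zero_rpow (by linarith : (1:ℝ) + α ≠ 0), mul_zero, abs_zero]
        exact mul_nonneg hlamnn (Real.rpow_nonneg le_rfl _)
      · have h1u : (1 - u) ∈ Set.Icc (-1:ℝ) 1 := by
          constructor <;> [linarith [hu.2, hh2]; linarith]
        have hP := abs_legendre_eval_sub_one_le l h1u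
        rw [show (1:ℝ) - (1 - u) = u by ring] at hP
        have he := eval_legendre_sub_one l (1 - u)
        have hTu : |(legT l).eval (1 - u)| * u ^ 2 ≤ lam * u := by
          have h2 : u ^ 2 * (legT l).eval (1 - u)
              = ((legendre l).eval (1 - u) - 1) + (lam / 2) * u := by
            rw [he]; ring
          have h3 : |u ^ 2 * (legT l).eval (1 - u)| ≤ (lam / 2) * u + (lam / 2) * u := by
            rw [h2]
            refine (abs_add_le _ _).trans (add_le_add hP ?_)
            rw [abs_of_nonneg (by positivity)]
          calc |(legT l).eval (1 - u)| * u ^ 2 = |u ^ 2 * (legT l).eval (1 - u)| := by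
                rw [abs_mul, abs_of_nonneg (by positivity : (0:ℝ) ≤ u ^ 2)]; ring
            _ ≤ (lam / 2) * u + (lam / 2) * u := h3
            _ = lam * u := by ring
        have : |I2 u| = |(legT l).eval (1 - u)| * u ^ (1 + α) := by
          rw [hI2]
          simp only []
          rw [abs_mul, abs_of_nonneg (Real.rpow_nonneg hu.1 _)]
        rw [this, ← e4 u hu0, ← mul_assoc]
        calc |(legT l).eval (1 - u)| * u ^ 2 * u ^ (α - 1)
            ≤ (lam * u) * u ^ (α - 1) :=
              mul_le_mul_of_nonneg_right hTu (Real.rpow_nonneg hu.1 _)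
          _ = lam * (u * u ^ (α - 1)) := by ring
          _ = lam * u ^ α := by rw [e3 u hu0]
    have hint : ∫ u in (0:ℝ)..h, |I2 u| ≤ ∫ u in (0:ℝ)..h, lam * u ^ α :=
      intervalIntegral.integral_mono_on hhpos.le i2.abs (i1.const_mul lam) hptA
    have hval : ∫ u in (0:ℝ)..h, lam * u ^ α = lam * (h ^ (α + 1) / (α + 1)) := by
      rw [intervalIntegral.integral_const_mul, integral_rpow (Or.inl hα),
        Real.zero_rpow (by linarith : α + 1 ≠ 0)]
      ring
    calc |lambdaNL α δ l + lam| = 2 * π * KK * |∫ u in (0:ℝ)..h, I2 u| := habs0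
      _ ≤ 2 * π * KK * (lam * (h ^ (α + 1) / (α + 1))) := by
          refine mul_le_mul_of_nonneg_left ((habs.trans hint).trans_eq hval) (by positivity)
      _ = lam * (2 * π * KK * h ^ (α + 1)) / (α + 1) := by ring
      _ = lam * (2 * (1 + α)) / (α + 1) := by rw [hkey]
      _ = 2 * lam := by
          have hne : α + 1 ≠ 0 := by linarith
          rw [show (1:ℝ) + α = α + 1 by ring]
          field_simp
  · -- bound B
    have hptB : ∀ u ∈ Set.Icc (0:ℝ) h, |I2 u| ≤ legM l * u ^ (1 + α) := by
      intro u hu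
      have : |I2 u| = |(legT l).eval (1 - u)| * u ^ (1 + α) := by
        rw [hI2]
        rw [abs_mul, abs_of_nonneg (Real.rpow_nonneg hu.1 _)]
      rw [this]
      refine mul_le_mul_of_nonneg_right (abs_legT_eval_le l ?_) (Real.rpow_nonneg hu.1 _)
      rw [show (1:ℝ) - u - 1 = -u by ring, abs_neg, abs_of_nonneg hu.1]
      linarith [hu.2, hh2]
    have hint : ∫ u in (0:ℝ)..h, |I2 u| ≤ ∫ u in (0:ℝ)..h, legM l * u ^ (1 + α) :=
      intervalIntegral.integral_mono_on hhpos.le i2.abs (i1'.const_mul _) hptB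
    have hval : ∫ u in (0:ℝ)..h, legM l * u ^ (1 + α)
        = legM l * (h ^ (α + 1) * h / (α + 2)) := by
      rw [intervalIntegral.integral_const_mul, integral_rpow (Or.inl (by linarith : (-1:ℝ) < 1 + α)),
        Real.zero_rpow (by linarith : 1 + α + 1 ≠ 0)]
      rw [show (1:ℝ) + α + 1 = (α + 1) + 1 by ring, Real.rpow_add hhpos, Real.rpow_one]
      ring
    calc |lambdaNL α δ l + lam| = 2 * π * KK * |∫ u in (0:ℝ)..h, I2 u| := habs0
      _ ≤ 2 * π * KK * (legM l * (h ^ (α + 1) * h / (α + 2))) := by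
          refine mul_le_mul_of_nonneg_left ((habs.trans hint).trans_eq hval) (by positivity)
      _ = legM l * (2 * π * KK * h ^ (α + 1)) * h / (α + 2) := by ring
      _ = legM l * (2 * (1 + α)) * h / (α + 2) := by rw [hkey]
      _ ≤ legM l * δ ^ 2 := by
          rw [hh]
          have hM := legM_nonneg l
          have h1 : (0:ℝ) < α + 2 := by linarith
          rw [div_le_iff₀ h1]
          nlinarith [sq_nonneg δ]

end Main

/-- In coefficient form: `L_δ → L_0` strongly as operators from `H^s(S²)` to `H^{s-2}(S²)`
as `δ → 0⁺`. -/
theorem nonlocal_operator_strong_convergence (s α : ℝ) (hα : -1 < α) (hα1 : α < 1)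
    (u : ℕ → ℝ)
    (hu : Summable fun l : ℕ => ((l : ℝ) + 1 / 2) ^ (2 * s) * u l ^ 2) :
    Filter.Tendsto
      (fun δ : ℝ => ∑' l : ℕ,
        ((l : ℝ) + 1 / 2) ^ (2 * (s - 2)) * (lambdaNL α δ l + (l : ℝ) * ((l : ℝ) + 1)) ^ 2 * u l ^ 2)
      (nhdsWithin 0 (Set.Ioi 0)) (nhds 0) := by
  set F : ℝ → ℕ → ℝ := fun δ l =>
    ((l : ℝ) + 1 / 2) ^ (2 * (s - 2)) * (lambdaNL α δ l + (l : ℝ) * ((l : ℝ) + 1)) ^ 2 * u l ^ 2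
    with hF
  have hmem : Set.Ioc (0:ℝ) 1 ∈ nhdsWithin (0:ℝ) (Set.Ioi 0) :=
    Ioc_mem_nhdsGT_of_mem (by norm_num : (0:ℝ) ∈ Set.Ico (0:ℝ) 1)
  have key := tendsto_tsum_of_dominated_convergence
    (f := F) (g := fun _ : ℕ => (0:ℝ))
    (bound := fun l : ℕ => 4 * (((l : ℝ) + 1 / 2) ^ (2 * s) * u l ^ 2))
    (hu.mul_left 4)
    (fun l => by
      -- pointwise convergence to 0
      have hb : (0:ℝ) < (l : ℝ) + 1 / 2 := by positivity
      apply squeeze_zero' (g := fun δ : ℝ =>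
        ((l : ℝ) + 1 / 2) ^ (2 * (s - 2)) * legM l ^ 2 * u l ^ 2 * δ ^ 4)
      · filter_upwards [hmem] with δ hδ
        rw [hF]
        positivity
      · filter_upwards [hmem] with δ hδ
        have hB := (lambdaNL_bounds hα hδ.1 hδ.2 l).2
        have hsq : (lambdaNL α δ l + (l : ℝ) * ((l:ℝ) + 1)) ^ 2 ≤ (legM l * δ ^ 2) ^ 2 := by
          rw [← sq_abs]
          exact pow_le_pow_left₀ (abs_nonneg _) hB 2
        rw [hF]
        calc ((l : ℝ) + 1 / 2) ^ (2 * (s - 2)) * (lambdaNL α δ l + (l : ℝ) * ((l:ℝ) + 1)) ^ 2 * u l ^ 2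
            ≤ ((l : ℝ) + 1 / 2) ^ (2 * (s - 2)) * (legM l * δ ^ 2) ^ 2 * u l ^ 2 := by
              have h1 : (0:ℝ) ≤ ((l : ℝ) + 1 / 2) ^ (2 * (s - 2)) := (Real.rpow_pos_of_pos hb _).le
              have h2 : (0:ℝ) ≤ u l ^ 2 := sq_nonneg _
              exact mul_le_mul_of_nonneg_right (mul_le_mul_of_nonneg_left hsq h1) h2
          _ = ((l : ℝ) + 1 / 2) ^ (2 * (s - 2)) * legM l ^ 2 * u l ^ 2 * δ ^ 4 := by ring
      · have : Filter.Tendsto (fun δ : ℝ =>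
            ((l : ℝ) + 1 / 2) ^ (2 * (s - 2)) * legM l ^ 2 * u l ^ 2 * δ ^ 4)
            (nhds 0) (nhds (((l : ℝ) + 1 / 2) ^ (2 * (s - 2)) * legM l ^ 2 * u l ^ 2 * 0 ^ 4)) :=
          (Filter.Tendsto.const_mul _ ((continuous_pow 4).tendsto 0))
        have h0 : (((l : ℝ) + 1 / 2) ^ (2 * (s - 2)) * legM l ^ 2 * u l ^ 2 * 0 ^ 4 : ℝ) = 0 := by
          norm_num
        rw [h0] at this
        exact this.mono_left nhdsWithin_le_nhds)
    (by
      filter_upwards [hmem] with δ hδ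
      intro l
      have hb : (0:ℝ) < (l : ℝ) + 1 / 2 := by positivity
      have hA := (lambdaNL_bounds hα hδ.1 hδ.2 l).1
      have hlam : (l : ℝ) * ((l:ℝ) + 1) ≤ ((l : ℝ) + 1 / 2) ^ 2 := by nlinarith [Nat.cast_nonneg (α := ℝ) l]
      have hlamnn : (0:ℝ) ≤ (l : ℝ) * ((l:ℝ) + 1) := by positivity
      have hsq : (lambdaNL α δ l + (l : ℝ) * ((l:ℝ) + 1)) ^ 2
          ≤ 4 * (((l : ℝ) + 1 / 2) ^ 2) ^ 2 := by
        rw [← sq_abs]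
        calc |lambdaNL α δ l + (l : ℝ) * ((l:ℝ) + 1)| ^ 2 ≤ (2 * ((l : ℝ) * ((l:ℝ) + 1))) ^ 2 :=
              pow_le_pow_left₀ (abs_nonneg _) hA 2
          _ ≤ (2 * ((l : ℝ) + 1 / 2) ^ 2) ^ 2 := by nlinarith
          _ = 4 * (((l : ℝ) + 1 / 2) ^ 2) ^ 2 := by ring
      have hrw : ((l : ℝ) + 1 / 2) ^ (2 * (s - 2)) * ((((l : ℝ) + 1 / 2) ^ 2) ^ 2)
          = ((l : ℝ) + 1 / 2) ^ (2 * s) := by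
        rw [← pow_mul, ← Real.rpow_natCast ((l : ℝ) + 1 / 2) (2 * 2), ← Real.rpow_add hb]
        norm_num
        rw [show 2 * (s - 2) + 4 = 2 * s by ring]
      have hFnn : (0:ℝ) ≤ F δ l := by rw [hF]; positivity
      rw [Real.norm_eq_abs, abs_of_nonneg hFnn, hF]
      calc ((l : ℝ) + 1 / 2) ^ (2 * (s - 2)) * (lambdaNL α δ l + (l : ℝ) * ((l:ℝ) + 1)) ^ 2 * u l ^ 2
          ≤ ((l : ℝ) + 1 / 2) ^ (2 * (s - 2)) * (4 * (((l : ℝ) + 1 / 2) ^ 2) ^ 2) * u l ^ 2 := by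
            have h1 : (0:ℝ) ≤ ((l : ℝ) + 1 / 2) ^ (2 * (s - 2)) := (Real.rpow_pos_of_pos hb _).le
            exact mul_le_mul_of_nonneg_right (mul_le_mul_of_nonneg_left hsq h1) (sq_nonneg _)
        _ = 4 * (((l : ℝ) + 1 / 2) ^ (2 * (s - 2)) * ((((l : ℝ) + 1 / 2) ^ 2) ^ 2)) * u l ^ 2 := by
            ring
        _ = 4 * (((l : ℝ) + 1 / 2) ^ (2 * s) * u l ^ 2) := by rw [hrw]; ring)
  rwa [tsum_zero] at key
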